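/- Assuming the KKM lemma, Sperner's lemma holds: for any simplicial subdivision of the unit simplex $\Delta \subseteq \mathbb{R}^n$ with a Sperner labeling, there exists a completely labeled simplex in the subdivision. -/

import Mathlib

open Finset

section Aux

/-- Uniqueness of barycentric representations over an affinely independent finite set. -/
private lemma unique_weights {n : ℕ} {S : Finset (Fin n → ℝ)}
    (hS : AffineIndependent ℝ ((↑) : S → (Fin n → ℝ)))
    {w₁ w₂ : (Fin n → ℝ) → ℝ} (h1 : ∑ y ∈ S, w₁ y = 1) (h2 : ∑ y ∈ S, w₂ y = 1)
    (heq : ∑ y ∈ S, w₁ y • y = ∑ y ∈ S, w₂ y • y) :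
    ∀ y ∈ S, w₁ y = w₂ y := by
  classical
  have h1' : ∑ i : S, w₁ (i : Fin n → ℝ) = 1 := by rw [Finset.sum_coe_sort]; exact h1
  have h2' : ∑ i : S, w₂ (i : Fin n → ℝ) = 1 := by rw [Finset.sum_coe_sort]; exact h2
  have hcomb :
      Finset.univ.affineCombination ℝ ((↑) : S → (Fin n → ℝ)) (fun i => w₁ (i : Fin n → ℝ)) =
      Finset.univ.affineCombination ℝ ((↑) : S → (Fin n → ℝ)) (fun i => w₂ (i : Fin n → ℝ)) := by
    rw [Finset.affineCombination_eq_linear_combination _ _ _ h1',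
      Finset.affineCombination_eq_linear_combination _ _ _ h2']
    rw [Finset.sum_coe_sort S (fun y => w₁ y • y), Finset.sum_coe_sort S (fun y => w₂ y • y)]
    exact heq
  have := (affineIndependent_iff_indicator_eq_of_affineCombination_eq ℝ
    ((↑) : S → (Fin n → ℝ))).mp hS Finset.univ Finset.univ _ _ h1' h2' hcomb
  intro y hy
  have := congrFun this ⟨y, hy⟩
  simpa using this

private lemma mem_shrink_iff {n : ℕ} (hn : 2 ≤ n) {S : Finset (Fin n → ℝ)}
    {v x : Fin n → ℝ} (hv : v ∈ S) :
    x ∈ (fun u => (n : ℝ)⁻¹ • v + (1 - (n : ℝ)⁻¹) • u) '' (convexHull ℝ (↑S : Set (Fin n → ℝ))) ↔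
      ∃ w : (Fin n → ℝ) → ℝ, (∀ y ∈ S, 0 ≤ w y) ∧ ∑ y ∈ S, w y = 1 ∧
        (n : ℝ)⁻¹ ≤ w v ∧ ∑ y ∈ S, w y • y = x := by
  classical
  set c : ℝ := (n : ℝ)⁻¹ with hc
  have hn1 : (1 : ℝ) < (n : ℝ) := by exact_mod_cast hn.trans_lt' one_lt_two |>.trans_le le_rfl
  have hc0 : 0 < c := by positivity
  have hc1 : c < 1 := by
    rw [hc, inv_lt_one_iff₀]; right; exact_mod_cast by exact_mod_cast hn1
  have h1c : 0 < 1 - c := by linarith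
  constructor
  · rintro ⟨z, hz, rfl⟩
    obtain ⟨s, hs0, hs1, rfl⟩ := Finset.mem_convexHull'.mp hz
    refine ⟨fun y => c * (if y = v then 1 else 0) + (1 - c) * s y, ?_, ?_, ?_, ?_⟩
    · intro y hy
      have := hs0 y hy
      positivity
    · rw [Finset.sum_add_distrib, ← Finset.mul_sum, ← Finset.mul_sum, hs1,
        Finset.sum_ite_eq' S v (fun _ => (1 : ℝ)), if_pos hv]
      ring
    · have := hs0 v hv
      simp only [eq_self_iff_true, if_true, mul_one]
      nlinarith
    · rw [Finset.sum_congr rfl (fun y _ => add_smul (c * (if y = v then 1 else 0))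
        ((1 - c) * s y) y), Finset.sum_add_distrib]
      simp only [mul_smul, ← Finset.smul_sum, ite_smul, one_smul, zero_smul]
      rw [Finset.sum_ite_eq' S v (fun y => y), if_pos hv]
  · rintro ⟨w, hw0, hw1, hwv, rfl⟩
    refine ⟨∑ y ∈ S, ((1 - c)⁻¹ * (w y - c * (if y = v then 1 else 0))) • y, ?_, ?_⟩
    · apply Finset.mem_convexHull'.mpr
      refine ⟨fun y => (1 - c)⁻¹ * (w y - c * (if y = v then 1 else 0)), ?_, ?_, rfl⟩
      · intro y hy
        rcases eq_or_ne y v with rfl | hne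
        · have h : 0 ≤ w y - c := by linarith
          simp only [eq_self_iff_true, if_true, mul_one]
          exact mul_nonneg (inv_nonneg.mpr h1c.le) h
        · simp only [if_neg hne, mul_zero, sub_zero]
          exact mul_nonneg (by positivity) (hw0 y hy)
      · rw [← Finset.mul_sum]
        rw [Finset.sum_sub_distrib, hw1, ← Finset.mul_sum,
          Finset.sum_ite_eq' S v (fun _ => (1 : ℝ)), if_pos hv]
        field_simp
    · show c • v + (1 - c) • (∑ y ∈ S, ((1 - c)⁻¹ * (w y - c * (if y = v then 1 else 0))) • y)
          = ∑ y ∈ S, w y • y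
      rw [Finset.smul_sum]
      simp only [smul_smul]
      have hkey : ∀ y ∈ S, ((1 - c) * ((1 - c)⁻¹ * (w y - c * (if y = v then 1 else 0)))) • y
          = (w y - c * (if y = v then 1 else 0)) • y := by
        intro y _
        congr 1
        field_simp
      rw [Finset.sum_congr rfl hkey]
      simp only [sub_smul, Finset.sum_sub_distrib]
      simp only [mul_smul, ← Finset.smul_sum, ite_smul, one_smul, zero_smul]
      rw [Finset.sum_ite_eq' S v (fun y => y), if_pos hv]
      module
end Aux

/-- `𝒮` is a simplicial subdivision of the unit simplex in `ℝ^n`: a finite collection of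
`(n-1)`-simplices (each given by its `n` affinely independent vertices, lying in the unit
simplex) whose union is the unit simplex, and such that the intersection of any two of
them is empty or a common face. -/
def IsSubdivision (n : ℕ) (𝒮 : Finset (Finset (Fin n → ℝ))) : Prop :=
  (∀ S ∈ 𝒮, S.card = n ∧ AffineIndependent ℝ ((↑) : S → (Fin n → ℝ)) ∧
    (↑S : Set (Fin n → ℝ)) ⊆ stdSimplex ℝ (Fin n)) ∧
  (⋃ S ∈ 𝒮, convexHull ℝ (↑S : Set (Fin n → ℝ))) = stdSimplex ℝ (Fin n) ∧
  (∀ S ∈ 𝒮, ∀ T ∈ 𝒮,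
    convexHull ℝ (↑S : Set (Fin n → ℝ)) ∩ convexHull ℝ (↑T : Set (Fin n → ℝ)) = ∅ ∨
    ∃ F : Finset (Fin n → ℝ), F ⊆ S ∧ F ⊆ T ∧
      convexHull ℝ (↑S : Set (Fin n → ℝ)) ∩ convexHull ℝ (↑T : Set (Fin n → ℝ)) =
        convexHull ℝ (↑F : Set (Fin n → ℝ)))

/-- `ℓ` is a Sperner labeling of the vertices of the subdivision `𝒮`: each vertex `v`
gets a label `ℓ v` with `v (ℓ v) > 0`. -/
def IsSpernerLabeling (n : ℕ) (𝒮 : Finset (Finset (Fin n → ℝ)))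
    (ℓ : (Fin n → ℝ) → Fin n) : Prop :=
  ∀ S ∈ 𝒮, ∀ v ∈ S, 0 < v (ℓ v)

/-- A simplex `S` of the subdivision is completely labeled: its vertices carry all `n` labels. -/
def IsCompletelyLabeled (n : ℕ) (S : Finset (Fin n → ℝ))
    (ℓ : (Fin n → ℝ) → Fin n) : Prop :=
  ∀ i : Fin n, ∃ v ∈ S, ℓ v = i

/-- The KKM lemma implies Sperner's lemma: assuming the KKM lemma (for closed subsets of
the unit simplex in `ℝ^n`), any simplicial subdivision of the unit simplex with a Sperner
labeling contains a completely labeled simplex. -/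
theorem kkm_implies_sperner (n : ℕ)
    (kkm : ∀ C : Fin n → Set (Fin n → ℝ),
      (∀ i, IsClosed (C i)) → (∀ i, C i ⊆ stdSimplex ℝ (Fin n)) →
      (∀ J : Finset (Fin n), J.Nonempty →
        convexHull ℝ ((fun i => (Pi.single i 1 : Fin n → ℝ)) '' ↑J) ⊆ ⋃ j ∈ J, C j) →
      (⋂ i, C i).Nonempty)
    (𝒮 : Finset (Finset (Fin n → ℝ))) (h𝒮 : IsSubdivision n 𝒮)
    (ℓ : (Fin n → ℝ) → Fin n) (hℓ : IsSpernerLabeling n 𝒮 ℓ) :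
    ∃ S ∈ 𝒮, IsCompletelyLabeled n S ℓ := by
  classical
  obtain ⟨hS3, hcover, hface⟩ := h𝒮
  rcases Nat.lt_or_ge n 2 with h2 | h2
  · rcases (by omega : n = 0 ∨ n = 1) with rfl | rfl
    · exact (ℓ fun i => i.elim0).elim0
    · have hx : (fun _ => (1 : ℝ)) ∈ stdSimplex ℝ (Fin 1) := ⟨fun _ => zero_le_one, by simp⟩
      rw [← hcover] at hx
      simp only [Set.mem_iUnion, exists_prop] at hx
      obtain ⟨S, hS, hxS⟩ := hx
      obtain ⟨v, rfl⟩ := Finset.card_eq_one.mp (hS3 S hS).1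
      exact ⟨{v}, hS, fun i => ⟨v, Finset.mem_singleton_self v, Subsingleton.elim _ _⟩⟩
  · have hn0 : 0 < n := by omega
    set c : ℝ := (n : ℝ)⁻¹ with hcdef
    have hc0 : 0 < c := by positivity
    have hc1 : c < 1 := by
      rw [hcdef, inv_lt_one_iff₀]; right; exact_mod_cast h2.trans_lt' one_lt_two
    set C : Fin n → Set (Fin n → ℝ) := fun i =>
      ⋃ S ∈ 𝒮, ⋃ v ∈ S.filter (fun u => ℓ u = i),
        (fun u => c • v + (1 - c) • u) '' convexHull ℝ (↑S : Set (Fin n → ℝ)) with hCdef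
    have hmemC : ∀ i x, x ∈ C i ↔ ∃ S ∈ 𝒮, ∃ v ∈ S, ℓ v = i ∧
        x ∈ (fun u => c • v + (1 - c) • u) '' convexHull ℝ (↑S : Set (Fin n → ℝ)) := by
      intro i x
      simp only [hCdef, Set.mem_iUnion, Finset.mem_filter, exists_prop]
      constructor
      · rintro ⟨S, hS, v, ⟨hv, hl⟩, hx⟩; exact ⟨S, hS, v, hv, hl, hx⟩
      · rintro ⟨S, hS, v, hv, hl, hx⟩; exact ⟨S, hS, v, ⟨hv, hl⟩, hx⟩
    have hclosed : ∀ i, IsClosed (C i) := by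
      intro i
      apply isClosed_biUnion_finset
      intro S _
      apply isClosed_biUnion_finset
      intro v _
      exact ((S.finite_toSet.isCompact_convexHull ℝ).image
        (continuous_const.add (continuous_id.const_smul (1 - c)))).isClosed
    have hsub' : ∀ S ∈ 𝒮, convexHull ℝ (↑S : Set (Fin n → ℝ)) ⊆ stdSimplex ℝ (Fin n) :=
      fun S hS => convexHull_min (hS3 S hS).2.2 (convex_stdSimplex ℝ (Fin n))
    have hsubset : ∀ i, C i ⊆ stdSimplex ℝ (Fin n) := by
      intro i x hx
      obtain ⟨S, hS, v, hv, _, z, hz, rfl⟩ := (hmemC i x).mp hx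
      exact (convex_stdSimplex ℝ (Fin n)) ((hS3 S hS).2.2 hv) (hsub' S hS hz)
        hc0.le (by linarith) (by ring)
    have hcov : ∀ J : Finset (Fin n), J.Nonempty →
        convexHull ℝ ((fun i => (Pi.single i 1 : Fin n → ℝ)) '' ↑J) ⊆ ⋃ j ∈ J, C j := by
      intro J _ x hx
      have hxstd : x ∈ stdSimplex ℝ (Fin n) := by
        refine convexHull_min ?_ (convex_stdSimplex ℝ (Fin n)) hx
        rintro y ⟨j, _, rfl⟩
        exact single_mem_stdSimplex ℝ j
      have hxz : ∀ i, i ∉ J → x i = 0 := by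
        intro i hi
        have hconv : convexHull ℝ ((fun j => (Pi.single j 1 : Fin n → ℝ)) '' ↑J) ⊆
            {y : Fin n → ℝ | y i = 0} := by
          apply convexHull_min
          · rintro y ⟨j, hj, rfl⟩
            have hne : i ≠ j := fun h => hi (h ▸ hj)
            simp [Set.mem_setOf_eq, Pi.single_eq_of_ne hne]
          · intro a ha b hb s t hs ht hst
            simp only [Set.mem_setOf_eq] at *
            simp [ha, hb]
        exact hconv hx
      rw [← hcover] at hxstd
      simp only [Set.mem_iUnion, exists_prop] at hxstd
      obtain ⟨S, hS, hxS⟩ := hxstd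
      obtain ⟨w, hw0, hw1, hwx⟩ := Finset.mem_convexHull'.mp hxS
      have hSne : S.Nonempty := by
        rw [← Finset.card_pos, (hS3 S hS).1]; omega
      have hple : ∑ _y ∈ S, c ≤ ∑ y ∈ S, w y := by
        rw [hw1, Finset.sum_const, (hS3 S hS).1, nsmul_eq_mul, hcdef, mul_inv_cancel₀]
        exact_mod_cast hn0.ne'
      obtain ⟨v, hvS, hvw⟩ := Finset.exists_le_of_sum_le hSne hple
      have hvz : ∀ i, i ∉ J → v i = 0 := by
        intro i hi
        have hx0 : x i = 0 := hxz i hi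
        have hsum : ∑ y ∈ S, w y * y i = 0 := by
          have h := congrFun hwx i
          rw [Finset.sum_apply] at h
          simpa [hx0, Pi.smul_apply, smul_eq_mul] using h
        have hnn : ∀ y ∈ S, 0 ≤ w y * y i := fun y hy =>
          mul_nonneg (hw0 y hy) (((hS3 S hS).2.2 hy).1 i)
        have hterm : w v * v i = 0 := (Finset.sum_eq_zero_iff_of_nonneg hnn).mp hsum v hvS
        have hwv : 0 < w v := lt_of_lt_of_le hc0 hvw
        exact (mul_eq_zero.mp hterm).resolve_left hwv.ne'
      have hlJ : ℓ v ∈ J := by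
        by_contra h
        have h1 := hvz (ℓ v) h
        have h2 := hℓ S hS v hvS
        linarith
      refine Set.mem_biUnion hlJ ?_
      exact (hmemC (ℓ v) x).mpr ⟨S, hS, v, hvS, rfl,
        (mem_shrink_iff h2 hvS).mpr ⟨w, hw0, hw1, hvw, hwx⟩⟩
    obtain ⟨x, hx⟩ := kkm C hclosed hsubset hcov
    have hxC : ∀ i, x ∈ C i := Set.mem_iInter.mp hx
    obtain ⟨S, hS, v₀, hv₀, _, hxS⟩ := (hmemC ⟨0, hn0⟩ x).mp (hxC ⟨0, hn0⟩)
    have hxconvS : x ∈ convexHull ℝ (↑S : Set (Fin n → ℝ)) := by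
      obtain ⟨z, hz, rfl⟩ := hxS
      exact (convex_convexHull ℝ _) (subset_convexHull ℝ _ hv₀) hz hc0.le
        (by linarith) (by ring)
    refine ⟨S, hS, fun i => ?_⟩
    obtain ⟨T, hT, v, hvT, hlv, hxT⟩ := (hmemC i x).mp (hxC i)
    obtain ⟨w, hw0, hw1, hwv, hwx⟩ := (mem_shrink_iff h2 hvT).mp hxT
    have hxconvT : x ∈ convexHull ℝ (↑T : Set (Fin n → ℝ)) :=
      Finset.mem_convexHull'.mpr ⟨w, hw0, hw1, hwx⟩
    rcases hface S hS T hT with hemp | ⟨F, hFS, hFT, hFeq⟩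
    · exact absurd (Set.mem_inter hxconvS hxconvT) (by simp [hemp])
    · have hxF : x ∈ convexHull ℝ (↑F : Set (Fin n → ℝ)) :=
        hFeq ▸ Set.mem_inter hxconvS hxconvT
      obtain ⟨u, _, hu1, hux⟩ := Finset.mem_convexHull'.mp hxF
      set u' : (Fin n → ℝ) → ℝ := fun y => if y ∈ F then u y else 0 with hu'def
      have hu'1 : ∑ y ∈ T, u' y = 1 := by
        rw [← Finset.sum_subset hFT (fun y _ hy => if_neg hy)]
        rw [Finset.sum_congr rfl (fun y hy => if_pos hy)]
        exact hu1
      have hu'x : ∑ y ∈ T, u' y • y = x := by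
        rw [← Finset.sum_subset hFT (fun y _ hy => by
          simp only [hu'def, if_neg hy, zero_smul])]
        have hcg : ∑ y ∈ F, u' y • y = ∑ y ∈ F, u y • y :=
          Finset.sum_congr rfl (fun y hy => by simp only [hu'def, if_pos hy])
        rw [hcg]
        exact hux
      have heqw := unique_weights (hS3 T hT).2.1 hw1 hu'1 (hwx.trans hu'x.symm) v hvT
      have hvF : v ∈ F := by
        by_contra h
        rw [heqw, hu'def] at hwv
        simp only [if_neg h] at hwv
        linarith
      exact ⟨v, hFS hvF, hlv⟩
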